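/- Per-user finite-blocklength rate surrogate (Lemma 1, single time slot): Fix K ≥ 1, an index k ∈ {1,…,K}, a noise power s > 0, a constant β ≥ 0, and c = log₂ e = 1/ln 2. For a ∈ ℂᴷ define b(a) = Σ_{i=1}^{K}|a_i|² + s, I(a) = Σ_{i≠k}|a_i|² + s = b(a) − |a_k|², Γ(a) = |a_k|²/I(a), Δ(a) = c²(1 − 1/(1+Γ(a))²), and R(a) = log₂(1+Γ(a)) − β·√(Δ(a)). Let a⁰ ∈ ℂᴷ be a reference point with a⁰_k ≠ 0, and set Ξ₀ = I(a⁰)/b(a⁰), L(a) = (2/b(a⁰))·(Σ_{i≠k} Re(conj(a⁰_i)·a_i) + s) − (I(a⁰)/b(a⁰)²)·b(a), and define the surrogate R̃(a) = log₂(1+Γ(a⁰)) + c·[ 2·Re(conj(a⁰_k)·(a_k − a⁰_k))/I(a⁰) − (|a⁰_k|²/(b(a⁰)·I(a⁰)))·(b(a) − b(a⁰)) ] − β·√(Δ(a⁰)) − β·c²·Ξ₀·(Ξ₀ − L(a))/√(Δ(a⁰)). Then R(a) ≥ R̃(a) for every a ∈ ℂᴷ. -/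

import Mathlib

private lemma aux_log (bb II b0 I0 p q r : ℝ) (hII : 0 < II) (hI0 : 0 < I0)
    (hbb : bb = II + q ^ 2) (hb0 : b0 = I0 + p ^ 2) (hr : r ≤ p * q) :
    Real.log (b0 / I0) + (2 * (r - p ^ 2) / I0 - p ^ 2 / (b0 * I0) * (bb - b0))
      ≤ Real.log (bb / II) := by
  have hbb' : 0 < bb := by nlinarith [sq_nonneg q]
  have hb0' : 0 < b0 := by nlinarith [sq_nonneg p]
  have hx : 0 < (bb * I0) / (II * b0) := by positivity
  have hlog : 1 - ((bb * I0) / (II * b0))⁻¹ ≤ Real.log ((bb * I0) / (II * b0)) :=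
    Real.one_sub_inv_le_log_of_pos hx
  rw [inv_div] at hlog
  have hsplit : Real.log ((bb * I0) / (II * b0)) = Real.log (bb / II) - Real.log (b0 / I0) := by
    rw [Real.log_div (by positivity) (by positivity), Real.log_div (ne_of_gt hbb') (ne_of_gt hII),
      Real.log_div (ne_of_gt hb0') (ne_of_gt hI0), Real.log_mul (ne_of_gt hbb') (ne_of_gt hI0),
      Real.log_mul (ne_of_gt hII) (ne_of_gt hb0')]
    ring
  have num_nonneg : 0 ≤ q ^ 2 * b0 ^ 2 - 2 * r * bb * b0 + p ^ 2 * bb ^ 2 := by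
    nlinarith [sq_nonneg (q * b0 - p * bb), mul_pos hbb' hb0']
  have expand : 1 - (II * b0) / (bb * I0)
      - (2 * (r - p ^ 2) / I0 - p ^ 2 / (b0 * I0) * (bb - b0))
      = (q ^ 2 * b0 ^ 2 - 2 * r * bb * b0 + p ^ 2 * bb ^ 2) / (bb * b0 * I0) := by
    subst hbb hb0
    field_simp
    ring
  have h1 : 0 ≤ (q ^ 2 * b0 ^ 2 - 2 * r * bb * b0 + p ^ 2 * bb ^ 2) / (bb * b0 * I0) :=
    div_nonneg num_nonneg (by positivity)
  linarith

private lemma aux_conc (ξ ξ0 : ℝ) (h1 : 0 ≤ ξ) (h2 : ξ ≤ 1) (h3 : 0 ≤ ξ0) (h4 : ξ0 < 1) :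
    Real.sqrt (1 - ξ ^ 2) ≤ Real.sqrt (1 - ξ0 ^ 2) + ξ0 * (ξ0 - ξ) / Real.sqrt (1 - ξ0 ^ 2) := by
  have h02 : 0 < 1 - ξ0 ^ 2 := by nlinarith
  have hx2 : 0 ≤ 1 - ξ ^ 2 := by nlinarith
  set u := Real.sqrt (1 - ξ ^ 2) with hu
  set u0 := Real.sqrt (1 - ξ0 ^ 2) with hu0
  have hu0p : 0 < u0 := Real.sqrt_pos.mpr h02
  have hup : 0 ≤ u := Real.sqrt_nonneg _
  have husq : u ^ 2 = 1 - ξ ^ 2 := Real.sq_sqrt hx2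
  have hu0sq : u0 ^ 2 = 1 - ξ0 ^ 2 := Real.sq_sqrt h02.le
  have hB : 0 ≤ 1 - ξ0 * ξ := by nlinarith
  have key : u * u0 ≤ 1 - ξ0 * ξ := by
    nlinarith [sq_nonneg (ξ - ξ0), mul_nonneg hup hu0p.le, sq_nonneg (u * u0 - (1 - ξ0 * ξ)),
      sq_nonneg (u * u0 + (1 - ξ0 * ξ))]
  have hid : u0 + ξ0 * (ξ0 - ξ) / u0 = (1 - ξ0 * ξ) / u0 := by
    field_simp
    nlinarith [hu0sq]
  rw [hid, le_div_iff₀ hu0p]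
  exact key

private lemma aux_cs' (A P Q s : ℝ) (hA : 0 ≤ A) (hP : 0 ≤ P) (hQ : 0 ≤ Q) (hs : 0 ≤ s)
    (h : A ^ 2 ≤ P * Q) : A + s ≤ Real.sqrt ((P + s) * (Q + s)) := by
  rw [Real.le_sqrt (by linarith) (by nlinarith)]
  have h2A : 2 * A ≤ P + Q := by nlinarith [sq_nonneg (P - Q)]
  nlinarith [h, mul_le_mul_of_nonneg_left h2A hs]

private lemma aux_frac (bb II b0 I0 T : ℝ) (hbb : 0 < bb) (hb0 : 0 < b0) (hII : 0 < II)
    (hI0 : 0 < I0) (hT : T ≤ Real.sqrt (I0 * II)) :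
    2 / b0 * T - I0 / b0 ^ 2 * bb ≤ II / bb := by
  set u := Real.sqrt I0 with hu
  set v := Real.sqrt II with hv
  have husq : u ^ 2 = I0 := Real.sq_sqrt hI0.le
  have hvsq : v ^ 2 = II := Real.sq_sqrt hII.le
  have hT' : T ≤ u * v := by rwa [Real.sqrt_mul hI0.le] at hT
  have key : 2 * b0 * bb * T - I0 * bb ^ 2 - II * b0 ^ 2 ≤ 0 := by
    nlinarith [sq_nonneg (v * b0 - u * bb), mul_pos hbb hb0, mul_le_mul_of_nonneg_left hT'
      (by positivity : (0:ℝ) ≤ 2 * b0 * bb)]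
  have expand : 2 / b0 * T - I0 / b0 ^ 2 * bb - II / bb
      = (2 * b0 * bb * T - I0 * bb ^ 2 - II * b0 ^ 2) / (bb * b0 ^ 2) := by
    field_simp
  have : (2 * b0 * bb * T - I0 * bb ^ 2 - II * b0 ^ 2) / (bb * b0 ^ 2) ≤ 0 :=
    div_nonpos_of_nonpos_of_nonneg key (by positivity)
  linarith

/-- Per-user finite-blocklength rate surrogate (Lemma 1, single time slot):
with `b(a) = Σᵢ|aᵢ|² + s`, `I(a) = Σ_{i≠k}|aᵢ|² + s`, `Γ(a) = |a_k|²/I(a)`,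
`Δ(a) = c²(1 − 1/(1+Γ(a))²)`, `R(a) = log₂(1+Γ(a)) − β√(Δ(a))`,
`Ξ₀ = I(a⁰)/b(a⁰)`,
`L(a) = (2/b(a⁰))(Σ_{i≠k} Re(conj(a⁰ᵢ)aᵢ) + s) − (I(a⁰)/b(a⁰)²)·b(a)`, and
`R̃(a) = log₂(1+Γ(a⁰)) + c[2Re(conj(a⁰_k)(a_k−a⁰_k))/I(a⁰)
  − (|a⁰_k|²/(b(a⁰)I(a⁰)))(b(a)−b(a⁰))] − β√(Δ(a⁰))
  − βc²Ξ₀(Ξ₀−L(a))/√(Δ(a⁰))`,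
the surrogate lower-bounds the rate: `R(a) ≥ R̃(a)` for every `a ∈ ℂᴷ`. -/
theorem rate_surrogate_lower_bound
    (K : ℕ) (hK : 1 ≤ K) (k : Fin K) (s β c : ℝ)
    (hs : 0 < s) (hβ : 0 ≤ β) (hc : c = Real.logb 2 (Real.exp 1))
    (b I Γ Δ R : (Fin K → ℂ) → ℝ)
    (hb : ∀ a, b a = (∑ i, ‖a i‖ ^ 2) + s)
    (hI : ∀ a, I a = (∑ i ∈ Finset.univ.erase k, ‖a i‖ ^ 2) + s)
    (hI' : ∀ a, I a = b a - ‖a k‖ ^ 2)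
    (hΓ : ∀ a, Γ a = ‖a k‖ ^ 2 / I a)
    (hΔ : ∀ a, Δ a = c ^ 2 * (1 - 1 / (1 + Γ a) ^ 2))
    (hR : ∀ a, R a = Real.logb 2 (1 + Γ a) - β * Real.sqrt (Δ a))
    (a₀ : Fin K → ℂ) (ha₀ : a₀ k ≠ 0)
    (Ξ₀ : ℝ) (hΞ₀ : Ξ₀ = I a₀ / b a₀)
    (L Rt : (Fin K → ℂ) → ℝ)
    (hL : ∀ a, L a = (2 / b a₀)
          * ((∑ i ∈ Finset.univ.erase k, ((starRingEnd ℂ) (a₀ i) * a i).re) + s)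
        - (I a₀ / (b a₀) ^ 2) * b a)
    (hRt : ∀ a, Rt a = Real.logb 2 (1 + Γ a₀)
        + c * (2 * ((starRingEnd ℂ) (a₀ k) * (a k - a₀ k)).re / I a₀
            - (‖a₀ k‖ ^ 2 / (b a₀ * I a₀)) * (b a - b a₀))
        - β * Real.sqrt (Δ a₀)
        - β * c ^ 2 * Ξ₀ * (Ξ₀ - L a) / Real.sqrt (Δ a₀)) :
    ∀ a : Fin K → ℂ, Rt a ≤ R a := by
  intro a
  have hlog2 : (0:ℝ) < Real.log 2 := Real.log_pos one_lt_two
  have hc' : c = 1 / Real.log 2 := by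
    rw [hc]; simp [Real.logb, Real.log_exp]
  have hcpos : 0 < c := by rw [hc']; positivity
  -- positivity of I and b
  have hIpos : ∀ x : Fin K → ℂ, 0 < I x := by
    intro x
    rw [hI]
    have : (0:ℝ) ≤ ∑ i ∈ Finset.univ.erase k, ‖x i‖ ^ 2 :=
      Finset.sum_nonneg (fun i _ => sq_nonneg _)
    linarith
  have hbI : ∀ x : Fin K → ℂ, b x = I x + ‖x k‖ ^ 2 := by
    intro x; have := hI' x; linarith
  have hbpos : ∀ x : Fin K → ℂ, 0 < b x := by
    intro x; rw [hbI x]; have := hIpos x; nlinarith [sq_nonneg ‖x k‖]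
  have hp : 0 < ‖a₀ k‖ ^ 2 := by
    have : 0 < ‖a₀ k‖ := norm_pos_iff.mpr ha₀
    positivity
  -- 1 + Γ = b / I
  have hΓb : ∀ x : Fin K → ℂ, 1 + Γ x = b x / I x := by
    intro x
    have hne : I x ≠ 0 := ne_of_gt (hIpos x)
    rw [hΓ x, hbI x]
    field_simp
  -- log part
  have hre : ((starRingEnd ℂ) (a₀ k) * (a k - a₀ k)).re
      = ((starRingEnd ℂ) (a₀ k) * a k).re - ‖a₀ k‖ ^ 2 := by
    have hw : (starRingEnd ℂ) (a₀ k) * a₀ k = ((‖a₀ k‖ ^ 2 : ℝ) : ℂ) := by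
      rw [mul_comm, Complex.mul_conj, Complex.normSq_eq_norm_sq]
    rw [mul_sub, Complex.sub_re, hw, Complex.ofReal_re]
  have hrle : ∀ i : Fin K, ((starRingEnd ℂ) (a₀ i) * a i).re ≤ ‖a₀ i‖ * ‖a i‖ := by
    intro i
    calc ((starRingEnd ℂ) (a₀ i) * a i).re ≤ ‖(starRingEnd ℂ) (a₀ i) * a i‖ :=
          Complex.re_le_norm _
    _ = ‖a₀ i‖ * ‖a i‖ := by
        rw [norm_mul, Complex.norm_conj]
  have hlogpart : Real.logb 2 (1 + Γ a₀)
      + c * (2 * ((starRingEnd ℂ) (a₀ k) * (a k - a₀ k)).re / I a₀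
          - (‖a₀ k‖ ^ 2 / (b a₀ * I a₀)) * (b a - b a₀))
      ≤ Real.logb 2 (1 + Γ a) := by
    have main := aux_log (b a) (I a) (b a₀) (I a₀) ‖a₀ k‖ ‖a k‖
      (((starRingEnd ℂ) (a₀ k) * a k).re) (hIpos a) (hIpos a₀) (hbI a) (hbI a₀) (hrle k)
    rw [hΓb a, hΓb a₀, Real.logb, Real.logb, hc', hre]
    calc Real.log (b a₀ / I a₀) / Real.log 2
        + 1 / Real.log 2 * (2 * (((starRingEnd ℂ) (a₀ k) * a k).re - ‖a₀ k‖ ^ 2) / I a₀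
          - ‖a₀ k‖ ^ 2 / (b a₀ * I a₀) * (b a - b a₀))
        = (Real.log (b a₀ / I a₀) + (2 * (((starRingEnd ℂ) (a₀ k) * a k).re - ‖a₀ k‖ ^ 2) / I a₀
          - ‖a₀ k‖ ^ 2 / (b a₀ * I a₀) * (b a - b a₀))) / Real.log 2 := by ring
    _ ≤ Real.log (b a / I a) / Real.log 2 := by
        exact (div_le_div_iff_of_pos_right hlog2).mpr main
  -- sqrt part
  have hΔx : ∀ x : Fin K → ℂ, Real.sqrt (Δ x) = c * Real.sqrt (1 - (I x / b x) ^ 2) := by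
    intro x
    rw [hΔ x, hΓb x]
    have h1 : 1 / (b x / I x) ^ 2 = (I x / b x) ^ 2 := by
      rw [one_div, ← inv_pow, inv_div]
    rw [h1, Real.sqrt_mul (sq_nonneg c), Real.sqrt_sq hcpos.le]
  have hXi : ∀ x : Fin K → ℂ, 0 ≤ I x / b x ∧ I x / b x ≤ 1 := by
    intro x
    refine ⟨div_nonneg (hIpos x).le (hbpos x).le, ?_⟩
    rw [div_le_one (hbpos x), hbI x]
    nlinarith [sq_nonneg ‖x k‖]
  have hΞ₀nn : 0 ≤ Ξ₀ := by rw [hΞ₀]; exact div_nonneg (hIpos a₀).le (hbpos a₀).le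
  have hΞ₀lt : Ξ₀ < 1 := by
    rw [hΞ₀, div_lt_one (hbpos a₀), hbI a₀]
    linarith
  -- Cauchy-Schwarz: L a ≤ I a / b a
  have hCS : (∑ i ∈ Finset.univ.erase k, ((starRingEnd ℂ) (a₀ i) * a i).re) + s
      ≤ Real.sqrt (I a₀ * I a) := by
    set t := Finset.univ.erase k
    set A := ∑ i ∈ t, ‖a₀ i‖ * ‖a i‖ with hA
    have h1 : (∑ i ∈ t, ((starRingEnd ℂ) (a₀ i) * a i).re) ≤ A :=
      Finset.sum_le_sum (fun i _ => hrle i)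
    have hAnn : 0 ≤ A :=
      Finset.sum_nonneg (fun i _ => mul_nonneg (norm_nonneg _) (norm_nonneg _))
    have h2 : A ^ 2 ≤ (∑ i ∈ t, ‖a₀ i‖ ^ 2) * (∑ i ∈ t, ‖a i‖ ^ 2) :=
      Finset.sum_mul_sq_le_sq_mul_sq t (fun i => ‖a₀ i‖) (fun i => ‖a i‖)
    have h3 := aux_cs' A (∑ i ∈ t, ‖a₀ i‖ ^ 2) (∑ i ∈ t, ‖a i‖ ^ 2) s hAnn
      (Finset.sum_nonneg (fun i _ => sq_nonneg _)) (Finset.sum_nonneg (fun i _ => sq_nonneg _))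
      hs.le h2
    rw [hI a₀, hI a]
    calc (∑ i ∈ t, ((starRingEnd ℂ) (a₀ i) * a i).re) + s ≤ A + s := by linarith
    _ ≤ _ := h3
  have hLa : L a ≤ I a / b a := by
    rw [hL a]
    have := aux_frac (b a) (I a) (b a₀) (I a₀)
      ((∑ i ∈ Finset.univ.erase k, ((starRingEnd ℂ) (a₀ i) * a i).re) + s)
      (hbpos a) (hbpos a₀) (hIpos a) (hIpos a₀) hCS
    linarith [this]
  have hsqrt : Real.sqrt (Δ a) ≤ Real.sqrt (Δ a₀)
      + c ^ 2 * Ξ₀ * (Ξ₀ - L a) / Real.sqrt (Δ a₀) := by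
    rw [hΔx a, hΔx a₀]
    have hu0p : 0 < Real.sqrt (1 - (I a₀ / b a₀) ^ 2) := by
      apply Real.sqrt_pos.mpr
      have := hXi a₀
      rw [← hΞ₀] at *
      nlinarith [hΞ₀nn, hΞ₀lt]
    have hΞ₀' : I a₀ / b a₀ = Ξ₀ := hΞ₀.symm
    rw [hΞ₀']
    have hconc := aux_conc (I a / b a) Ξ₀ (hXi a).1 (hXi a).2 hΞ₀nn hΞ₀lt
    have hmono : Ξ₀ * (Ξ₀ - I a / b a) / Real.sqrt (1 - Ξ₀ ^ 2)
        ≤ Ξ₀ * (Ξ₀ - L a) / Real.sqrt (1 - Ξ₀ ^ 2) := by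
      rw [hΞ₀'] at hu0p
      apply (div_le_div_iff_of_pos_right hu0p).mpr
      nlinarith [hLa, hΞ₀nn]
    have hdiv : c ^ 2 * Ξ₀ * (Ξ₀ - L a) / (c * Real.sqrt (1 - Ξ₀ ^ 2))
        = c * (Ξ₀ * (Ξ₀ - L a) / Real.sqrt (1 - Ξ₀ ^ 2)) := by
      rw [hΞ₀'] at hu0p
      field_simp
    rw [hdiv, ← mul_add]
    apply mul_le_mul_of_nonneg_left _ hcpos.le
    calc Real.sqrt (1 - (I a / b a) ^ 2)
        ≤ Real.sqrt (1 - Ξ₀ ^ 2) + Ξ₀ * (Ξ₀ - I a / b a) / Real.sqrt (1 - Ξ₀ ^ 2) := hconc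
    _ ≤ _ := by linarith [hmono]
  -- combine
  rw [hR a, hRt a]
  have h2 := mul_le_mul_of_nonneg_left hsqrt hβ
  rw [mul_add] at h2
  have hid : β * c ^ 2 * Ξ₀ * (Ξ₀ - L a) / Real.sqrt (Δ a₀)
      = β * (c ^ 2 * Ξ₀ * (Ξ₀ - L a) / Real.sqrt (Δ a₀)) := by ring
  linarith [hlogpart, h2, hid.le, hid.ge]
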